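/- Set T = {w ∈ W | w(B₁) = B₁}. Then W₀ is the semidirect product of the normal subgroup W₁ by the subgroup T; that is, T normalizes W₁, W₀ = W₁·T, and W₁ ∩ T = {1}. -/

import Mathlib

open scoped Classical RealInnerProductSpace

/-- Context: `R` is a finite crystallographic root system in a real inner product
space `V`, with Weyl group `W` (generated by the reflections `s α`), positive
system `Rpos`, simple roots `B`; `B1 ⊆ B` and `R1` is the subroot system with
simple roots `B1`, with positive roots `R1 ∩ Rpos` and Weyl group `W1`. -/
theorem stmt_3
    {V : Type*} [NormedAddCommGroup V] [InnerProductSpace ℝ V]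
    (R : Finset V)
    (hR0 : ∀ α ∈ R, α ≠ 0)
    (hRcrys : ∀ α ∈ R, ∀ β ∈ R, ∃ n : ℤ, 2 * ⟪β, α⟫ / ⟪α, α⟫ = (n : ℝ))
    (hRred : ∀ α ∈ R, ∀ t : ℝ, t • α ∈ R → t = 1 ∨ t = -1)
    (s : V → (V ≃ₗᵢ[ℝ] V))
    (hs : ∀ α ∈ R, ∀ x : V, s α x = x - (2 * ⟪x, α⟫ / ⟪α, α⟫) • α)
    (hRs : ∀ α ∈ R, ∀ β ∈ R, s α β ∈ R)
    (W : Subgroup (V ≃ₗᵢ[ℝ] V))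
    (hW : W = Subgroup.closure {g | ∃ α ∈ R, g = s α})
    (Rpos : Finset V) (hRposSub : Rpos ⊆ R)
    (hRsplit : ∀ α ∈ R, (α ∈ Rpos ∨ -α ∈ Rpos) ∧ ¬(α ∈ Rpos ∧ -α ∈ Rpos))
    (B : Finset V) (hBsub : B ⊆ Rpos)
    (hBindep : LinearIndependent ℝ (Subtype.val : {x : V // x ∈ B} → V))
    (hBgen : ∀ α ∈ Rpos, ∃ c : V → ℕ, α = ∑ b ∈ B, (c b : ℝ) • b)
    (B1 : Finset V) (hB1B : B1 ⊆ B)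
    (R1 : Finset V)
    (hR1 : ∀ α, α ∈ R1 ↔ α ∈ R ∧ (α : V) ∈ Submodule.span ℝ (B1 : Set V))
    (W1 : Subgroup (V ≃ₗᵢ[ℝ] V))
    (hW1 : W1 = Subgroup.closure {g | ∃ α ∈ R1, g = s α}) :
    -- T normalizes W₁
    (∀ t ∈ W, Finset.image (fun α => t α) B1 = B1 →
        ∀ u ∈ W1, t * u * t⁻¹ ∈ W1) ∧
    -- W₀ ⊆ W₁ · T
    (∀ w ∈ W, Finset.image (fun α => w α) R1 = R1 →
        ∃ u ∈ W1, ∃ t ∈ W, Finset.image (fun α => t α) B1 = B1 ∧ w = u * t) ∧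
    -- W₁ · T ⊆ W₀
    (∀ u ∈ W1, ∀ t ∈ W, Finset.image (fun α => t α) B1 = B1 →
        u * t ∈ W ∧ Finset.image (fun α => (u * t) α) R1 = R1) ∧
    -- W₁ ∩ T = {1}
    (∀ g ∈ W1, g ∈ W → Finset.image (fun α => g α) B1 = B1 → g = 1) := by
  subst hW
  subst hW1
  -- basic membership facts
  have hR1R : ∀ α ∈ R1, α ∈ R := fun α hα => ((hR1 α).1 hα).1
  have hB1R : ∀ b ∈ B1, b ∈ R := fun b hb => hRposSub (hBsub (hB1B hb))
  have hB1pos : ∀ b ∈ B1, b ∈ Rpos := fun b hb => hBsub (hB1B hb)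
  have hB1R1 : ∀ b ∈ B1, b ∈ R1 := fun b hb =>
    (hR1 b).2 ⟨hB1R b hb, Submodule.subset_span (Finset.mem_coe.mpr hb)⟩
  have hip : ∀ α ∈ R, (0:ℝ) < ⟪α, α⟫ := by
    intro α hα
    rcases lt_or_eq_of_le (real_inner_self_nonneg (x := α)) with h | h
    · exact h
    · exact absurd (real_inner_self_nonpos.mp h.symm.le) (hR0 α hα)
  -- reflection basics
  have hss : ∀ α ∈ R, s α α = -α := by
    intro α hα
    rw [hs α hα α, mul_div_assoc, div_self (ne_of_gt (hip α hα)), mul_one, two_smul]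
    abel
  have hs2 : ∀ α ∈ R, ∀ x, s α (s α x) = x := by
    intro α hα x
    have hk : ⟪α, α⟫ ≠ 0 := ne_of_gt (hip α hα)
    rw [hs α hα x, hs α hα, inner_sub_left, real_inner_smul_left, div_mul_cancel₀ _ hk]
    match_scalars <;> field_simp <;> ring
  have hs1 : ∀ α ∈ R, s α * s α = 1 := by
    intro α hα
    refine LinearIsometryEquiv.ext fun x => ?_
    simp only [LinearIsometryEquiv.coe_mul, Function.comp_apply, LinearIsometryEquiv.coe_one,
      id_eq]
    exact hs2 α hα x
  have hsinv : ∀ α ∈ R, (s α)⁻¹ = s α := fun α hα => inv_eq_of_mul_eq_one_right (hs1 α hα)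
  have hnegR : ∀ α ∈ R, -α ∈ R := by
    intro α hα
    have := hRs α hα α hα
    rwa [hss α hα] at this
  have hsneg : ∀ α ∈ R, s (-α) = s α := by
    intro α hα
    refine LinearIsometryEquiv.ext fun x => ?_
    rw [hs (-α) (hnegR α hα) x, hs α hα x, inner_neg_neg, inner_neg_right]
    match_scalars <;> ring
  have hconj : ∀ (g : V ≃ₗᵢ[ℝ] V), ∀ α ∈ R, g α ∈ R → g * s α = s (g α) * g := by
    intro g α hα hgα
    refine LinearIsometryEquiv.ext fun x => ?_
    simp only [LinearIsometryEquiv.coe_mul, Function.comp_apply]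
    rw [hs α hα x, hs (g α) hgα (g x), map_sub, LinearIsometryEquiv.map_smul,
      LinearIsometryEquiv.inner_map_map, LinearIsometryEquiv.inner_map_map]
  -- linear independence and coefficients
  have huniq : ∀ f g : V → ℝ, ∑ b ∈ B, f b • b = ∑ b ∈ B, g b • b → ∀ b ∈ B, f b = g b := by
    intro f g h b hb
    have h2 : ∑ i ∈ (Finset.univ : Finset {x : V // x ∈ B}), (f i.1 - g i.1) • (i.1 : V)
        = (0:V) := by
      rw [Finset.univ_eq_attach, Finset.sum_attach B (fun b => (f b - g b) • b)]
      simp only [sub_smul, Finset.sum_sub_distrib, h, sub_self]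
    have := linearIndependent_iff'.mp hBindep Finset.univ
      (fun i : {x : V // x ∈ B} => f i.1 - g i.1) h2 ⟨b, hb⟩ (Finset.mem_univ _)
    have h3 : f b - g b = 0 := this
    linarith
  have hext : ∀ f : V → ℝ, ∑ b ∈ B, (if b ∈ B1 then f b else 0) • b = ∑ b ∈ B1, f b • b := by
    intro f
    rw [← Finset.sum_subset hB1B (fun x _ hx => by simp [hx])]
    exact Finset.sum_congr rfl fun x hx => by rw [if_pos hx]
  have huniq1 : ∀ f g : V → ℝ, ∑ b ∈ B1, f b • b = ∑ b ∈ B1, g b • b →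
      ∀ b ∈ B1, f b = g b := by
    intro f g h b hb
    have := huniq (fun x => if x ∈ B1 then f x else 0) (fun x => if x ∈ B1 then g x else 0)
      (by rw [hext f, hext g, h]) b (hB1B hb)
    simpa [hb] using this
  have hsign : ∀ α ∈ R, ∀ f : V → ℝ, α = ∑ b ∈ B, f b • b → (∃ b ∈ B, 0 < f b) →
      α ∈ Rpos := by
    intro α hα f hf hex
    obtain ⟨b, hb, hfb⟩ := hex
    by_contra hneg
    have hnα : -α ∈ Rpos := by
      rcases (hRsplit α hα).1 with h | h
      · exact absurd h hneg
      · exact h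
    obtain ⟨c, hc⟩ := hBgen (-α) hnα
    have hα2 : α = ∑ b ∈ B, (-(c b : ℝ)) • b := by
      have : α = -∑ b ∈ B, (c b : ℝ) • b := by rw [← hc]; simp
      rw [this, ← Finset.sum_neg_distrib]
      exact Finset.sum_congr rfl fun x _ => (neg_smul _ _).symm
    have h8 : f b = -(c b : ℝ) := huniq f (fun b => -(c b : ℝ)) (hf.symm.trans hα2) b hb
    have h2 : (0:ℝ) ≤ (c b : ℝ) := Nat.cast_nonneg _
    linarith
  have hsign1 : ∀ α ∈ R, ∀ f : V → ℝ, α = ∑ b ∈ B1, f b • b → (∃ b ∈ B1, 0 < f b) →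
      α ∈ Rpos := by
    intro α hα f hf hex
    obtain ⟨b, hb, hfb⟩ := hex
    exact hsign α hα (fun x => if x ∈ B1 then f x else 0) (hf.trans (hext f).symm)
      ⟨b, hB1B hb, by simpa [hb] using hfb⟩
  have hrep1 : ∀ α ∈ R1, α ∈ Rpos → ∃ c : V → ℕ, α = ∑ b ∈ B1, (c b : ℝ) • b := by
    intro α hα1 hαp
    obtain ⟨fr, -, hfr⟩ := Submodule.mem_span_finset.mp ((hR1 α).1 hα1).2
    obtain ⟨c, hc⟩ := hBgen α hαp
    have heq : ∀ b ∈ B, (if b ∈ B1 then fr b else 0) = (c b : ℝ) :=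
      huniq _ _ (by rw [hext fr, hfr, ← hc])
    refine ⟨c, ?_⟩
    rw [hc]
    exact (Finset.sum_subset hB1B (fun x hx hx1 => by
      rw [show ((c x : ℝ)) = 0 from by rw [← heq x hx, if_neg hx1], zero_smul])).symm
  -- closure properties
  have hsR1 : ∀ α ∈ R1, ∀ β ∈ R1, s α β ∈ R1 := by
    intro α hα β hβ
    refine (hR1 _).2 ⟨hRs α (hR1R α hα) β (hR1R β hβ), ?_⟩
    rw [hs α (hR1R α hα) β]
    exact Submodule.sub_mem _ ((hR1 β).1 hβ).2 (Submodule.smul_mem _ _ ((hR1 α).1 hα).2)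
  have hWR : ∀ w ∈ Subgroup.closure {g : V ≃ₗᵢ[ℝ] V | ∃ α ∈ R, g = s α},
      ∀ α ∈ R, w α ∈ R := by
    intro w hw
    have key : (∀ α ∈ R, w α ∈ R) ∧ (∀ α ∈ R, w⁻¹ α ∈ R) := by
      refine Subgroup.closure_induction
        (p := fun g _ => (∀ α ∈ R, g α ∈ R) ∧ (∀ α ∈ R, g⁻¹ α ∈ R)) ?_ ?_ ?_ ?_ hw
      · rintro x ⟨α, hα, rfl⟩
        refine ⟨fun β hβ => hRs α hα β hβ, ?_⟩
        rw [hsinv α hα]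
        exact fun β hβ => hRs α hα β hβ
      · constructor <;> intro β hβ <;> simpa using hβ
      · intro x y hx hy px py
        constructor
        · intro β hβ
          exact px.1 _ (py.1 β hβ)
        · intro β hβ
          rw [mul_inv_rev]
          exact py.2 _ (px.2 β hβ)
      · intro x hx px
        exact ⟨px.2, by rw [inv_inv]; exact px.1⟩
    exact key.1
  have hW1R1 : ∀ w ∈ Subgroup.closure {g : V ≃ₗᵢ[ℝ] V | ∃ α ∈ R1, g = s α},
      ∀ α ∈ R1, w α ∈ R1 := by
    intro w hw
    have key : (∀ α ∈ R1, w α ∈ R1) ∧ (∀ α ∈ R1, w⁻¹ α ∈ R1) := by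
      refine Subgroup.closure_induction
        (p := fun g _ => (∀ α ∈ R1, g α ∈ R1) ∧ (∀ α ∈ R1, g⁻¹ α ∈ R1)) ?_ ?_ ?_ ?_ hw
      · rintro x ⟨α, hα, rfl⟩
        refine ⟨fun β hβ => hsR1 α hα β hβ, ?_⟩
        rw [hsinv α (hR1R α hα)]
        exact fun β hβ => hsR1 α hα β hβ
      · constructor <;> intro β hβ <;> simpa using hβ
      · intro x y hx hy px py
        constructor
        · intro β hβ
          exact px.1 _ (py.1 β hβ)
        · intro β hβ
          rw [mul_inv_rev]
          exact py.2 _ (px.2 β hβ)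
      · intro x hx px
        exact ⟨px.2, by rw [inv_inv]; exact px.1⟩
    exact key.1
  have hW1W : Subgroup.closure {g : V ≃ₗᵢ[ℝ] V | ∃ α ∈ R1, g = s α} ≤
      Subgroup.closure {g : V ≃ₗᵢ[ℝ] V | ∃ α ∈ R, g = s α} :=
    Subgroup.closure_mono (fun g hg => by
      obtain ⟨α, hα, e⟩ := hg
      exact ⟨α, hR1R α hα, e⟩)
  have himageeq : ∀ (g : V ≃ₗᵢ[ℝ] V) (S : Finset V), (∀ α ∈ S, g α ∈ S) →
      Finset.image (fun α => g α) S = S := by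
    intro g S h
    apply Finset.eq_of_subset_of_card_le
    · intro y hy
      obtain ⟨x, hx, rfl⟩ := Finset.mem_image.mp hy
      exact h x hx
    · rw [Finset.card_image_of_injective _ g.injective]
  -- s b applied to a B1-combination
  have hsbeq : ∀ b ∈ B1, ∀ α, ∀ c : V → ℕ, α = ∑ x ∈ B1, (c x : ℝ) • x →
      s b α = ∑ x ∈ B1, ((c x : ℝ) - (if x = b then 2 * ⟪α, b⟫ / ⟪b, b⟫ else 0)) • x := by
    intro b hb α c hc
    rw [hs b (hB1R b hb) α]
    have h2 : ∑ x ∈ B1, ((c x : ℝ) - (if x = b then 2 * ⟪α, b⟫ / ⟪b, b⟫ else 0)) • x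
        = (∑ x ∈ B1, (c x : ℝ) • x) - (2 * ⟪α, b⟫ / ⟪b, b⟫) • b := by
      simp only [sub_smul, Finset.sum_sub_distrib, ite_smul, zero_smul, Finset.sum_ite_eq',
        hb, if_true]
    rw [h2, ← hc]
  -- simple reflections permute the other positive roots of R1
  have hsimp : ∀ b ∈ B1, ∀ α, α ∈ R1 → α ∈ Rpos → α ≠ b →
      (s b α ∈ R1 ∧ s b α ∈ Rpos) := by
    intro b hb α hα1 hαp hne
    have hbR := hB1R b hb
    have hαR := hR1R α hα1
    have h1 : s b α ∈ R1 := hsR1 b (hB1R1 b hb) α hα1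
    obtain ⟨c, hc⟩ := hrep1 α hα1 hαp
    have hex : ∃ b' ∈ B1, b' ≠ b ∧ c b' ≠ 0 := by
      by_contra h
      push_neg at h
      have hαb : α = (c b : ℝ) • b := by
        rw [hc]
        rw [Finset.sum_eq_single_of_mem b hb (fun x hx hxb => by rw [h x hx hxb]; simp)]
      rcases hRred b hbR (c b) (hαb ▸ hαR) with h1' | h1'
      · exact hne (by rw [hαb, h1', one_smul])
      · have h2 : (0:ℝ) ≤ (c b : ℝ) := Nat.cast_nonneg _
        rw [h1'] at h2
        linarith
    obtain ⟨b', hb', hbb', hcb'⟩ := hex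
    refine ⟨h1, ?_⟩
    refine hsign1 (s b α) (hR1R _ h1)
      (fun x => (c x : ℝ) - (if x = b then 2 * ⟪α, b⟫ / ⟪b, b⟫ else 0))
      (hsbeq b hb α c hc) ⟨b', hb', ?_⟩
    show (0:ℝ) < (c b' : ℝ) - (if b' = b then 2 * ⟪α, b⟫ / ⟪b, b⟫ else 0)
    rw [if_neg hbb']
    have h3 : (1:ℝ) ≤ (c b' : ℝ) := by exact_mod_cast Nat.one_le_iff_ne_zero.mpr hcb'
    linarith
  -- generation by simple reflections
  have hgen1 : ∀ n : ℕ, ∀ α, α ∈ R1 → α ∈ Rpos → ∀ c : V → ℕ,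
      α = ∑ b ∈ B1, (c b : ℝ) • b → ∑ b ∈ B1, c b ≤ n →
      s α ∈ Subgroup.closure {g : V ≃ₗᵢ[ℝ] V | ∃ b ∈ B1, g = s b} := by
    intro n
    induction n with
    | zero =>
      intro α hα1 hαp c hc hsum
      exfalso
      apply hR0 α (hR1R α hα1)
      rw [hc]
      apply Finset.sum_eq_zero
      intro b hb
      have : c b = 0 := by
        have := Finset.sum_le_sum_of_subset (Finset.singleton_subset_iff.mpr hb) (f := c)
        simp only [Finset.sum_singleton] at this
        omega
      rw [this]; simp
    | succ n ih =>
      intro α hα1 hαp c hc hsum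
      by_cases hαB : α ∈ B1
      · exact Subgroup.subset_closure ⟨α, hαB, rfl⟩
      · have hαR := hR1R α hα1
        have hstep : ∃ b ∈ B1, 0 < (c b : ℝ) * ⟪α, b⟫ := by
          by_contra h
          push_neg at h
          have h2 : ⟪α, α⟫ = ∑ b ∈ B1, (c b : ℝ) * ⟪α, b⟫ := by
            calc ⟪α, α⟫ = ⟪α, ∑ b ∈ B1, (c b : ℝ) • b⟫ := by rw [← hc]
            _ = ∑ b ∈ B1, (c b : ℝ) * ⟪α, b⟫ := by
                rw [inner_sum]
                exact Finset.sum_congr rfl fun b _ => real_inner_smul_right _ _ _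
          have h3 : ⟪α, α⟫ ≤ 0 := h2 ▸ Finset.sum_nonpos h
          exact absurd h3 (not_le.mpr (hip α hαR))
        obtain ⟨b, hb, hpos⟩ := hstep
        have hcb : c b ≠ 0 := by
          rintro h0
          rw [h0] at hpos
          simp at hpos
        have hiab : 0 < ⟪α, b⟫ := by
          rcases lt_or_ge 0 ⟪α, b⟫ with h | h
          · exact h
          · exfalso
            have h4 : (0:ℝ) ≤ (c b : ℝ) := Nat.cast_nonneg _
            nlinarith
        have hne : α ≠ b := fun h => hαB (h ▸ hb)
        have hβ := hsimp b hb α hα1 hαp hne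
        obtain ⟨d, hd⟩ := hrep1 _ hβ.1 hβ.2
        have hcoef : ∀ x ∈ B1, (d x : ℝ)
            = (c x : ℝ) - (if x = b then 2 * ⟪α, b⟫ / ⟪b, b⟫ else 0) :=
          huniq1 _ _ (by rw [← hd, hsbeq b hb α c hc])
        have hmpos : 0 < 2 * ⟪α, b⟫ / ⟪b, b⟫ :=
          div_pos (by linarith) (hip b (hB1R b hb))
        have hsum2 : (∑ x ∈ B1, (d x : ℝ))
            = (∑ x ∈ B1, (c x : ℝ)) - 2 * ⟪α, b⟫ / ⟪b, b⟫ := by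
          rw [Finset.sum_congr rfl hcoef, Finset.sum_sub_distrib]
          simp only [Finset.sum_ite_eq', hb, if_true]
        have hlt : ∑ x ∈ B1, d x < ∑ x ∈ B1, c x := by
          have h5 : (∑ x ∈ B1, (d x : ℝ)) < ∑ x ∈ B1, (c x : ℝ) := by
            rw [hsum2]; linarith
          have h6 : ((∑ x ∈ B1, d x : ℕ) : ℝ) < ((∑ x ∈ B1, c x : ℕ) : ℝ) := by
            push_cast
            exact h5
          exact_mod_cast h6
        have hdn : ∑ x ∈ B1, d x ≤ n := by omega
        have hsβ := ih (s b α) hβ.1 hβ.2 d hd hdn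
        have hbR := hB1R b hb
        have hsbαR : s b α ∈ R := hR1R _ hβ.1
        have hcj := hconj (s b) (s b α) hsbαR (by rw [hs2 b hbR α]; exact hαR)
        rw [hs2 b hbR α] at hcj
        have heq : s α = s b * s (s b α) * s b := by
          rw [hcj, mul_assoc, hs1 b hbR, mul_one]
        rw [heq]
        exact mul_mem (mul_mem (Subgroup.subset_closure ⟨b, hb, rfl⟩) hsβ)
          (Subgroup.subset_closure ⟨b, hb, rfl⟩)
  -- word representation
  have hrev : ∀ l : List V, (∀ x ∈ l, x ∈ B1) →
      ((l.map s).prod)⁻¹ = (l.reverse.map s).prod := by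
    intro l
    induction l with
    | nil => intro _; simp
    | cons a t ih =>
      intro hmem
      have ha : a ∈ B1 := hmem a List.mem_cons_self
      have ht : ∀ x ∈ t, x ∈ B1 := fun x hx => hmem x (List.mem_cons_of_mem a hx)
      simp only [List.map_cons, List.prod_cons, List.reverse_cons, List.map_append,
        List.prod_append, List.map_cons, List.prod_cons, List.map_nil, List.prod_nil, mul_one]
      rw [mul_inv_rev, ih ht, hsinv a (hB1R a ha)]
  have hword : ∀ w ∈ Subgroup.closure {g : V ≃ₗᵢ[ℝ] V | ∃ α ∈ R1, g = s α},
      ∃ l : List V, (∀ x ∈ l, x ∈ B1) ∧ w = (l.map s).prod := by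
    have hgenM : ∀ α ∈ R1, s α ∈ Subgroup.closure {g : V ≃ₗᵢ[ℝ] V | ∃ b ∈ B1, g = s b} := by
      intro α hα
      rcases (hRsplit α (hR1R α hα)).1 with hp | hp2
      · obtain ⟨c, hc⟩ := hrep1 α hα hp
        exact hgen1 (∑ b ∈ B1, c b) α hα hp c hc le_rfl
      · have hnα : -α ∈ R1 := (hR1 _).2 ⟨hnegR α (hR1R α hα),
          Submodule.neg_mem _ ((hR1 α).1 hα).2⟩
        obtain ⟨c, hc⟩ := hrep1 (-α) hnα hp2
        have := hgen1 (∑ b ∈ B1, c b) (-α) hnα hp2 c hc le_rfl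
        rwa [hsneg α (hR1R α hα)] at this
    intro w hw
    have hwM : w ∈ Subgroup.closure {g : V ≃ₗᵢ[ℝ] V | ∃ b ∈ B1, g = s b} := by
      refine (Subgroup.closure_le _).mpr ?_ hw
      rintro x ⟨α, hα, rfl⟩
      exact hgenM α hα
    refine Subgroup.closure_induction
      (p := fun g _ => ∃ l : List V, (∀ x ∈ l, x ∈ B1) ∧ g = (l.map s).prod) ?_ ?_ ?_ ?_ hwM
    · rintro x ⟨b, hb, rfl⟩
      exact ⟨[b], by simp [hb], by simp⟩
    · exact ⟨[], by simp, by simp⟩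
    · rintro x y hx hy ⟨l1, h1, rfl⟩ ⟨l2, h2, rfl⟩
      refine ⟨l1 ++ l2, ?_, by simp⟩
      intro x hx
      rcases List.mem_append.mp hx with h | h
      · exact h1 x h
      · exact h2 x h
    · rintro x hx ⟨l, hl, rfl⟩
      exact ⟨l.reverse, fun x hx => hl x (List.mem_reverse.mp hx), hrev l hl⟩
  have hPl : ∀ l : List V, (∀ x ∈ l, x ∈ B1) → ∀ α ∈ R1, ((l.map s).prod) α ∈ R1 := by
    intro l
    induction l with
    | nil => intro _ α hα; simpa using hα
    | cons a t ih =>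
      intro hmem α hα
      have ha : a ∈ B1 := hmem a List.mem_cons_self
      have ht : ∀ x ∈ t, x ∈ B1 := fun x hx => hmem x (List.mem_cons_of_mem a hx)
      simp only [List.map_cons, List.prod_cons, LinearIsometryEquiv.coe_mul,
        Function.comp_apply]
      exact hsR1 a (hB1R1 a ha) _ (ih ht α hα)
  -- deletion lemma
  have hdel : ∀ l : List V, (∀ x ∈ l, x ∈ B1) → ∀ b ∈ B1, ((l.map s).prod) b ∉ Rpos →
      ∃ l' : List V, (∀ x ∈ l', x ∈ B1) ∧ l'.length < l.length ∧
        (l'.map s).prod = (l.map s).prod * s b := by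
    intro l
    induction l with
    | nil =>
      intro _ b hb hneg
      exact absurd (by simpa using hB1pos b hb) hneg
    | cons a t ih =>
      intro hmem b hb hneg
      have ha : a ∈ B1 := hmem a List.mem_cons_self
      have ht : ∀ x ∈ t, x ∈ B1 := fun x hx => hmem x (List.mem_cons_of_mem a hx)
      have happly : ((a :: t).map s).prod = s a * (t.map s).prod := by simp
      by_cases hcase : ((t.map s).prod) b ∈ Rpos
      · have hγ1 : ((t.map s).prod) b ∈ R1 := hPl t ht b (hB1R1 b hb)
        have hγa : ((t.map s).prod) b = a := by
          by_contra hne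
          apply hneg
          have := (hsimp a ha _ hγ1 hcase hne).2
          rw [happly]
          simpa only [LinearIsometryEquiv.coe_mul, Function.comp_apply] using this
        have hcj : (t.map s).prod * s b = s a * (t.map s).prod := by
          have := hconj ((t.map s).prod) b (hB1R b hb) (by rw [hγa]; exact hB1R a ha)
          rw [hγa] at this
          exact this
        refine ⟨t, ht, by simp, ?_⟩
        rw [happly, ← hcj, mul_assoc, hs1 b (hB1R b hb), mul_one]
      · obtain ⟨l', hl'mem, hl'len, hl'eq⟩ := ih ht b hb hcase
        refine ⟨a :: l', ?_, by simpa using hl'len, ?_⟩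
        · intro x hx
          rcases List.mem_cons.mp hx with h | h
          · exact h ▸ ha
          · exact hl'mem x h
        · simp only [List.map_cons, List.prod_cons, happly, mul_assoc, hl'eq]
  -- main lemma
  have hmain : ∀ n : ℕ, ∀ l : List V, l.length ≤ n → (∀ x ∈ l, x ∈ B1) →
      (∀ α, α ∈ R1 → α ∈ Rpos → ((l.map s).prod) α ∈ Rpos) → (l.map s).prod = 1 := by
    intro n
    induction n with
    | zero =>
      intro l hlen _ _
      rw [List.length_eq_zero_iff.mp (Nat.le_zero.mp hlen)]
      simp
    | succ n ih =>
      intro l hlen hmem hpos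
      rcases l.eq_nil_or_concat with rfl | ⟨L, b, rfl⟩
      · simp
      · rw [List.concat_eq_append] at *
        have hb : b ∈ B1 := hmem b (by simp)
        have hL : ∀ x ∈ L, x ∈ B1 := fun x hx => hmem x (by simp [hx])
        have happly : ((L ++ [b]).map s).prod = (L.map s).prod * s b := by simp
        have hwb : ((L ++ [b]).map s).prod b ∈ Rpos := hpos b (hB1R1 b hb) (hB1pos b hb)
        have hwbR : ((L ++ [b]).map s).prod b ∈ R :=
          hR1R _ (hPl (L ++ [b]) hmem b (hB1R1 b hb))
        have hLb : ((L.map s).prod) b = -(((L ++ [b]).map s).prod b) := by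
          rw [happly]
          simp only [LinearIsometryEquiv.coe_mul, Function.comp_apply]
          rw [hss b (hB1R b hb), map_neg, neg_neg]
        have hLbneg : ((L.map s).prod) b ∉ Rpos := by
          rw [hLb]
          intro hcon
          exact (hRsplit _ hwbR).2 ⟨hwb, hcon⟩
        obtain ⟨l', hl'mem, hl'len, hl'eq⟩ := hdel L hL b hb hLbneg
        have hl'eq2 : (l'.map s).prod = ((L ++ [b]).map s).prod := by
          rw [hl'eq, happly]
        have hlen' : l'.length ≤ n := by
          have : L.length + 1 ≤ n + 1 := by simpa using hlen
          omega
        have := ih l' hlen' hl'mem (fun α h1 hp => by rw [hl'eq2]; exact hpos α h1 hp)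
        rw [← hl'eq2, this]
  have hB1fix : ∀ t ∈ Subgroup.closure {g : V ≃ₗᵢ[ℝ] V | ∃ α ∈ R, g = s α},
      Finset.image (fun α => t α) B1 = B1 → ∀ α ∈ R1, t α ∈ R1 := by
    intro t ht himg α hα
    refine (hR1 (t α)).2 ⟨hWR t ht α (hR1R α hα), ?_⟩
    obtain ⟨f, -, hf⟩ := Submodule.mem_span_finset.mp ((hR1 α).1 hα).2
    have h2 : t α = ∑ b ∈ B1, f b • (t b) := by
      rw [← hf, map_sum]
      exact Finset.sum_congr rfl fun b _ => by rw [LinearIsometryEquiv.map_smul]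
    rw [h2]
    refine Submodule.sum_mem _ fun b hb => Submodule.smul_mem _ _ (Submodule.subset_span ?_)
    have : t b ∈ Finset.image (fun α => t α) B1 := Finset.mem_image_of_mem _ hb
    rw [himg] at this
    exact Finset.mem_coe.mpr this
  have hpart1 : ∀ t ∈ Subgroup.closure {g : V ≃ₗᵢ[ℝ] V | ∃ α ∈ R, g = s α},
      Finset.image (fun α => t α) B1 = B1 →
      ∀ u ∈ Subgroup.closure {g : V ≃ₗᵢ[ℝ] V | ∃ α ∈ R1, g = s α},
      t * u * t⁻¹ ∈ Subgroup.closure {g : V ≃ₗᵢ[ℝ] V | ∃ α ∈ R1, g = s α} := by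
    intro t ht himg u hu
    refine Subgroup.closure_induction
      (p := fun u _ => t * u * t⁻¹ ∈
        Subgroup.closure {g : V ≃ₗᵢ[ℝ] V | ∃ α ∈ R1, g = s α}) ?_ ?_ ?_ ?_ hu
    · rintro x ⟨α, hα, rfl⟩
      have h1 : t α ∈ R1 := hB1fix t ht himg α hα
      have h2 : t * s α * t⁻¹ = s (t α) := by
        rw [hconj t α (hR1R α hα) (hR1R _ h1), mul_inv_cancel_right]
      rw [h2]
      exact Subgroup.subset_closure ⟨t α, h1, rfl⟩
    · simpa using one_mem _
    · intro x y hx hy px py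
      have : t * (x * y) * t⁻¹ = (t * x * t⁻¹) * (t * y * t⁻¹) := by group
      rw [this]
      exact mul_mem px py
    · intro x hx px
      have : t * x⁻¹ * t⁻¹ = (t * x * t⁻¹)⁻¹ := by group
      rw [this]
      exact inv_mem px
  have hpart4 : ∀ g ∈ Subgroup.closure {g : V ≃ₗᵢ[ℝ] V | ∃ α ∈ R1, g = s α},
      Finset.image (fun α => g α) B1 = B1 → g = 1 := by
    intro g hg himg
    have hgpos : ∀ α, α ∈ R1 → α ∈ Rpos → g α ∈ Rpos := by
      intro α h1 hp
      obtain ⟨c, hc⟩ := hrep1 α h1 hp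
      have hgα1 : g α ∈ R1 := hW1R1 g hg α h1
      have hgeq : g α = ∑ b' ∈ B1, (c (g.symm b') : ℝ) • b' := by
        conv_lhs => rw [hc]
        rw [map_sum]
        calc ∑ b ∈ B1, g ((c b : ℝ) • b) = ∑ b ∈ B1, (c (g.symm (g b)) : ℝ) • g b := by
              refine Finset.sum_congr rfl fun b _ => ?_
              rw [LinearIsometryEquiv.map_smul, g.symm_apply_apply]
        _ = ∑ b' ∈ Finset.image (fun α => g α) B1, (c (g.symm b') : ℝ) • b' :=
              (Finset.sum_image (g := fun α => g α)
                (f := fun b' => (c (g.symm b') : ℝ) • b')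
                (fun x _ y _ h => g.injective h)).symm
        _ = ∑ b' ∈ B1, (c (g.symm b') : ℝ) • b' := by rw [himg]
      have hex : ∃ b0 ∈ B1, c b0 ≠ 0 := by
        by_contra h
        push_neg at h
        apply hR0 α (hR1R α h1)
        rw [hc]
        exact Finset.sum_eq_zero fun b hb => by rw [h b hb]; simp
      obtain ⟨b0, hb0, hc0⟩ := hex
      refine hsign1 (g α) (hR1R _ hgα1) _ hgeq ⟨g b0, ?_, ?_⟩
      · have : g b0 ∈ Finset.image (fun α => g α) B1 := Finset.mem_image_of_mem _ hb0
        rwa [himg] at this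
      · rw [g.symm_apply_apply]
        exact_mod_cast Nat.pos_of_ne_zero hc0
    obtain ⟨l, hl, rfl⟩ := hword g hg
    exact hmain l.length l le_rfl hl hgpos
  -- a linear functional which is 1 on all of B
  have hφex : ∃ φ : V →ₗ[ℝ] ℝ, ∀ b ∈ B, φ b = 1 := by
    set K := Submodule.span ℝ (Set.range (Subtype.val : {x : V // x ∈ B} → V)) with hK
    obtain ⟨K', hK'⟩ := Submodule.exists_isCompl K
    set bs := Module.Basis.span hBindep with hbs
    set coordsum : K →ₗ[ℝ] ℝ := ∑ i : {x : V // x ∈ B}, bs.coord i with hcs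
    refine ⟨coordsum ∘ₗ (Submodule.linearProjOfIsCompl K K' hK'), ?_⟩
    intro b hb
    have hbK : b ∈ K := Submodule.subset_span ⟨⟨b, hb⟩, rfl⟩
    have hproj : Submodule.linearProjOfIsCompl K K' hK' b = ⟨b, hbK⟩ :=
      Submodule.linearProjOfIsCompl_apply_left hK' ⟨b, hbK⟩
    have hb2 : (⟨b, hbK⟩ : K) = bs ⟨b, hb⟩ := by
      apply Subtype.ext
      rw [Module.Basis.span_apply]
    simp only [LinearMap.coe_comp, Function.comp_apply, hproj, hb2, hcs,
      LinearMap.coe_sum, Finset.sum_apply, Module.Basis.coord_apply, Module.Basis.repr_self]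
    simp [Finsupp.single_apply]
  obtain ⟨φ, hφ⟩ := hφex
  have hφ1 : ∀ α, α ∈ R1 → α ∈ Rpos → ∃ k : ℕ, 1 ≤ k ∧ φ α = (k : ℝ) := by
    intro α h1 hp
    obtain ⟨c, hc⟩ := hrep1 α h1 hp
    refine ⟨∑ b ∈ B1, c b, ?_, ?_⟩
    · by_contra h
      push_neg at h
      have hz : ∀ b ∈ B1, c b = 0 := by
        intro b hb
        have h0 : ∑ b ∈ B1, c b = 0 := by omega
        have := Finset.sum_eq_zero_iff.mp h0
        exact this b hb
      apply hR0 α (hR1R α h1)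
      rw [hc]
      exact Finset.sum_eq_zero fun b hb => by rw [hz b hb]; simp
    · rw [hc, map_sum]
      push_cast
      exact Finset.sum_congr rfl fun b hb => by
        rw [map_smul, hφ b (hB1B hb)]
        simp [smul_eq_mul]
  -- induction on inversions
  have hinv : ∀ n : ℕ, ∀ w ∈ Subgroup.closure {g : V ≃ₗᵢ[ℝ] V | ∃ α ∈ R, g = s α},
      Finset.image (fun α => w α) R1 = R1 →
      ((R1 ∩ Rpos).filter (fun α => w α ∉ Rpos)).card ≤ n →
      ∃ v ∈ Subgroup.closure {g : V ≃ₗᵢ[ℝ] V | ∃ α ∈ R1, g = s α},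
        (∀ α, α ∈ R1 → α ∈ Rpos → (w * v) α ∈ Rpos) := by
    intro n
    induction n with
    | zero =>
      intro w hw himg hcard
      refine ⟨1, one_mem _, ?_⟩
      intro α h1 hp
      rw [mul_one]
      by_contra hneg
      have hmem : α ∈ (R1 ∩ Rpos).filter (fun α => w α ∉ Rpos) :=
        Finset.mem_filter.mpr ⟨Finset.mem_inter.mpr ⟨h1, hp⟩, hneg⟩
      have := Finset.card_pos.mpr ⟨α, hmem⟩
      omega
    | succ n ih =>
      intro w hw himg hcard
      have hwmapsR1 : ∀ α ∈ R1, w α ∈ R1 := by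
        intro α hα
        have : w α ∈ Finset.image (fun α => w α) R1 := Finset.mem_image_of_mem _ hα
        rwa [himg] at this
      by_cases h0 : ∀ α, α ∈ R1 → α ∈ Rpos → w α ∈ Rpos
      · exact ⟨1, one_mem _, by simpa using h0⟩
      · push_neg at h0
        have hbex : ∃ b ∈ B1, w b ∉ Rpos := by
          by_contra h
          push_neg at h
          obtain ⟨α, h1, hp, hneg⟩ := h0
          apply hneg
          obtain ⟨c, hc⟩ := hrep1 α h1 hp
          have hwαR : w α ∈ R := hWR w hw α (hR1R α h1)
          have hgeq : w α = ∑ b ∈ B1, (c b : ℝ) • (w b) := by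
            conv_lhs => rw [hc]
            rw [map_sum]
            exact Finset.sum_congr rfl fun b _ => by rw [LinearIsometryEquiv.map_smul]
          have hrepd : ∀ b : V, ∃ e : V → ℝ, (∀ x, 0 ≤ e x) ∧
              (b ∈ B1 → w b = ∑ x ∈ B, e x • x) := by
            intro b
            by_cases hb : b ∈ B1
            · obtain ⟨d, hd⟩ := hBgen (w b) (h b hb)
              exact ⟨fun x => (d x : ℝ), fun x => Nat.cast_nonneg _, fun _ => hd⟩
            · exact ⟨fun _ => 0, fun _ => le_rfl, fun h' => absurd h' hb⟩
          choose e he1 he2 using hrepd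
          have hwα2 : w α = ∑ x ∈ B, (∑ b ∈ B1, (c b : ℝ) * e b x) • x := by
            rw [hgeq]
            calc ∑ b ∈ B1, (c b : ℝ) • w b
                = ∑ b ∈ B1, (c b : ℝ) • (∑ x ∈ B, e b x • x) :=
                  Finset.sum_congr rfl fun b hb => by rw [he2 b hb]
            _ = ∑ b ∈ B1, ∑ x ∈ B, ((c b : ℝ) * e b x) • x := by
                  refine Finset.sum_congr rfl fun b _ => ?_
                  rw [Finset.smul_sum]
                  exact Finset.sum_congr rfl fun x _ => by rw [smul_smul]
            _ = ∑ x ∈ B, ∑ b ∈ B1, ((c b : ℝ) * e b x) • x := Finset.sum_comm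
            _ = ∑ x ∈ B, (∑ b ∈ B1, (c b : ℝ) * e b x) • x := by
                  refine Finset.sum_congr rfl fun x _ => ?_
                  rw [Finset.sum_smul]
          refine hsign (w α) hwαR _ hwα2 ?_
          by_contra hnone
          push_neg at hnone
          apply hR0 (w α) hwαR
          rw [hwα2]
          apply Finset.sum_eq_zero
          intro x hx
          have hn : 0 ≤ ∑ b ∈ B1, (c b : ℝ) * e b x :=
            Finset.sum_nonneg fun b _ => mul_nonneg (Nat.cast_nonneg _) (he1 b x)
          rw [le_antisymm (hnone x hx) hn, zero_smul]
        obtain ⟨b, hb, hwb⟩ := hbex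
        have hbR := hB1R b hb
        have hsbW : s b ∈ Subgroup.closure {g : V ≃ₗᵢ[ℝ] V | ∃ α ∈ R, g = s α} :=
          Subgroup.subset_closure ⟨b, hbR, rfl⟩
        have hw'W : w * s b ∈ Subgroup.closure {g : V ≃ₗᵢ[ℝ] V | ∃ α ∈ R, g = s α} :=
          mul_mem hw hsbW
        have hw'α : ∀ α : V, (w * s b) α = w (s b α) := fun α => rfl
        have himg' : Finset.image (fun α => (w * s b) α) R1 = R1 :=
          himageeq _ R1 (fun α hα => by
            rw [hw'α]
            exact hwmapsR1 _ (hsR1 b (hB1R1 b hb) α hα))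
        have hwbR1 : w b ∈ R1 := hwmapsR1 b (hB1R1 b hb)
        have hnwb : -(w b) ∈ Rpos := by
          rcases (hRsplit (w b) (hR1R _ hwbR1)).1 with h | h
          · exact absurd h hwb
          · exact h
        have hbI : b ∈ (R1 ∩ Rpos).filter (fun α => w α ∉ Rpos) :=
          Finset.mem_filter.mpr ⟨Finset.mem_inter.mpr ⟨hB1R1 b hb, hB1pos b hb⟩, hwb⟩
        have hIeq : (R1 ∩ Rpos).filter (fun α => (w * s b) α ∉ Rpos)
            = (((R1 ∩ Rpos).filter (fun α => w α ∉ Rpos)).erase b).image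
                (fun α => s b α) := by
          ext γ
          simp only [Finset.mem_filter, Finset.mem_image, Finset.mem_erase, Finset.mem_inter]
          constructor
          · rintro ⟨⟨hγ1, hγp⟩, hγn⟩
            have hγb : γ ≠ b := by
              intro heq
              apply hγn
              rw [heq, hw'α, hss b hbR, map_neg]
              exact hnwb
            refine ⟨s b γ, ⟨?_, ⟨(hsimp b hb γ hγ1 hγp hγb).1,
              (hsimp b hb γ hγ1 hγp hγb).2⟩, ?_⟩, hs2 b hbR γ⟩
            · intro hcon
              have : γ = -b := by
                have := congrArg (s b) hcon
                rw [hs2 b hbR γ, hss b hbR] at this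
                exact this
              rw [this] at hγp
              exact (hRsplit b hbR).2 ⟨hB1pos b hb, hγp⟩
            · exact hγn
          · rintro ⟨β, ⟨hβb, ⟨hβ1, hβp⟩, hβn⟩, rfl⟩
            refine ⟨⟨(hsimp b hb β hβ1 hβp hβb).1, (hsimp b hb β hβ1 hβp hβb).2⟩, ?_⟩
            rw [hw'α, hs2 b hbR β]
            exact hβn
        have hcard' : ((R1 ∩ Rpos).filter (fun α => (w * s b) α ∉ Rpos)).card ≤ n := by
          rw [hIeq, Finset.card_image_of_injective _ (s b).injective,
            Finset.card_erase_of_mem hbI]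
          have := Finset.card_pos.mpr ⟨b, hbI⟩
          omega
        obtain ⟨v', hv', hpos'⟩ := ih (w * s b) hw'W himg' hcard'
        refine ⟨s b * v', mul_mem (Subgroup.subset_closure ⟨b, hB1R1 b hb, rfl⟩) hv', ?_⟩
        intro α h1 hp
        have : w * (s b * v') = (w * s b) * v' := by group
        rw [this]
        exact hpos' α h1 hp
  -- part 2
  have hpart2 : ∀ w ∈ Subgroup.closure {g : V ≃ₗᵢ[ℝ] V | ∃ α ∈ R, g = s α},
      Finset.image (fun α => w α) R1 = R1 →
      ∃ u ∈ Subgroup.closure {g : V ≃ₗᵢ[ℝ] V | ∃ α ∈ R1, g = s α},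
        ∃ t ∈ Subgroup.closure {g : V ≃ₗᵢ[ℝ] V | ∃ α ∈ R, g = s α},
          Finset.image (fun α => t α) B1 = B1 ∧ w = u * t := by
    intro w hw himg
    obtain ⟨v, hv, hpos⟩ := hinv (((R1 ∩ Rpos).filter (fun α => w α ∉ Rpos)).card)
      w hw himg le_rfl
    set t := w * v with hteq
    have htW : t ∈ Subgroup.closure {g : V ≃ₗᵢ[ℝ] V | ∃ α ∈ R, g = s α} :=
      mul_mem hw (hW1W hv)
    have hwmapsR1 : ∀ α ∈ R1, w α ∈ R1 := by
      intro α hα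
      have : w α ∈ Finset.image (fun α => w α) R1 := Finset.mem_image_of_mem _ hα
      rwa [himg] at this
    have htR1 : ∀ α ∈ R1, t α ∈ R1 := by
      intro α hα
      have : t α = w (v α) := rfl
      rw [this]
      exact hwmapsR1 _ (hW1R1 v hv α hα)
    have hS : Finset.image (fun α => t α) (R1 ∩ Rpos) = R1 ∩ Rpos :=
      himageeq t _ (fun α hα => by
        obtain ⟨h1, hp⟩ := Finset.mem_inter.mp hα
        exact Finset.mem_inter.mpr ⟨htR1 α h1, hpos α h1 hp⟩)
    have htsymm : ∀ γ, γ ∈ R1 → γ ∈ Rpos → (t.symm γ ∈ R1 ∧ t.symm γ ∈ Rpos) := by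
      intro γ h1 hp
      have hγ : γ ∈ Finset.image (fun α => t α) (R1 ∩ Rpos) := by
        rw [hS]
        exact Finset.mem_inter.mpr ⟨h1, hp⟩
      obtain ⟨α, hα, hαγ⟩ := Finset.mem_image.mp hγ
      have h2 : t.symm γ = α := by
        rw [← hαγ]
        exact t.symm_apply_apply α
      rw [h2]
      exact ⟨(Finset.mem_inter.mp hα).1, (Finset.mem_inter.mp hα).2⟩
    have htB1 : ∀ b ∈ B1, t b ∈ B1 := by
      intro b hb
      have htb1 : t b ∈ R1 := htR1 b (hB1R1 b hb)
      have htbp : t b ∈ Rpos := hpos b (hB1R1 b hb) (hB1pos b hb)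
      obtain ⟨d, hd⟩ := hrep1 _ htb1 htbp
      have hb' : b = ∑ b' ∈ B1, (d b' : ℝ) • (t.symm b') := by
        have h3 : t.symm (t b) = b := t.symm_apply_apply b
        rw [← h3, hd, map_sum]
        exact Finset.sum_congr rfl fun b' _ => by rw [LinearIsometryEquiv.map_smul]
      have hφb : φ b = 1 := hφ b (hB1B hb)
      have hsum1 : (1:ℝ) = ∑ b' ∈ B1, (d b' : ℝ) * φ (t.symm b') := by
        rw [← hφb]
        conv_lhs => rw [hb']
        rw [map_sum]
        exact Finset.sum_congr rfl fun b' _ => by rw [map_smul, smul_eq_mul]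
      have hge : ∀ b' ∈ B1, (d b' : ℝ) ≤ (d b' : ℝ) * φ (t.symm b') := by
        intro b' h
        obtain ⟨k, hk1, hk2⟩ := hφ1 (t.symm b') (htsymm b' (hB1R1 b' h) (hB1pos b' h)).1
          (htsymm b' (hB1R1 b' h) (hB1pos b' h)).2
        rw [hk2]
        have hk3 : (1:ℝ) ≤ (k : ℝ) := by exact_mod_cast hk1
        nlinarith [Nat.cast_nonneg (α := ℝ) (d b')]
      have h1le : (∑ b' ∈ B1, (d b' : ℝ)) ≤ 1 := by
        rw [hsum1]
        exact Finset.sum_le_sum hge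
      have hge1 : 1 ≤ ∑ b' ∈ B1, d b' := by
        by_contra h
        push_neg at h
        have h0 : ∑ b' ∈ B1, d b' = 0 := by omega
        apply hR0 (t b) (hR1R _ htb1)
        rw [hd]
        exact Finset.sum_eq_zero fun b' hb' => by
          rw [Finset.sum_eq_zero_iff.mp h0 b' hb']
          simp
      have hsumd : ∑ b' ∈ B1, d b' = 1 := by
        have h4 : ((∑ b' ∈ B1, d b' : ℕ) : ℝ) ≤ 1 := by
          push_cast
          exact h1le
        have h5 : ∑ b' ∈ B1, d b' ≤ 1 := by exact_mod_cast h4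
        omega
      obtain ⟨b0, hb0, hdb0⟩ : ∃ b0 ∈ B1, d b0 ≠ 0 := by
        by_contra h
        push_neg at h
        have : ∑ b' ∈ B1, d b' = 0 := Finset.sum_eq_zero h
        omega
      have hall : ∀ x ∈ B1, x ≠ b0 → d x = 0 := by
        intro x hx hne
        have hxmem : x ∈ B1.erase b0 := Finset.mem_erase.mpr ⟨hne, hx⟩
        have h6 : d x ≤ ∑ y ∈ B1.erase b0, d y :=
          Finset.single_le_sum (fun _ _ => Nat.zero_le _) hxmem
        have h7 := Finset.add_sum_erase B1 d hb0
        omega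
      have hd1 : d b0 = 1 := by
        have := (Finset.sum_eq_single_of_mem b0 hb0
          (fun x hx hne => hall x hx hne)).symm.trans hsumd
        omega
      have : t b = b0 := by
        rw [hd, Finset.sum_eq_single_of_mem b0 hb0
          (fun x hx hne => by rw [hall x hx hne]; simp), hd1]
        simp
      rw [this]
      exact hb0
    have himgB1 : Finset.image (fun α => t α) B1 = B1 := himageeq t B1 htB1
    refine ⟨t * v⁻¹ * t⁻¹, hpart1 t htW himgB1 v⁻¹ (inv_mem hv), t, htW, himgB1, ?_⟩
    rw [hteq]
    group
  have hpart3 : ∀ u ∈ Subgroup.closure {g : V ≃ₗᵢ[ℝ] V | ∃ α ∈ R1, g = s α},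
      ∀ t ∈ Subgroup.closure {g : V ≃ₗᵢ[ℝ] V | ∃ α ∈ R, g = s α},
      Finset.image (fun α => t α) B1 = B1 →
      u * t ∈ Subgroup.closure {g : V ≃ₗᵢ[ℝ] V | ∃ α ∈ R, g = s α} ∧
        Finset.image (fun α => (u * t) α) R1 = R1 := by
    intro u hu t ht himg
    refine ⟨mul_mem (hW1W hu) ht, himageeq _ R1 ?_⟩
    intro α hα
    have h2 : (u * t) α = u (t α) := rfl
    rw [h2]
    exact hW1R1 u hu _ (hB1fix t ht himg α hα)
  exact ⟨hpart1, hpart2, hpart3, fun g hg _ himg => hpart4 g hg himg⟩
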